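/- Let R and H be complex matrices with H Hermitian, and let R_⊥ be an injective matrix whose range equals the kernel of R. Then there exists μ > 0 such that μ · R* R - H is positive definite if and only if R_⊥* H R_⊥ is negative definite. -/

import Mathlib

open Matrix
open scoped ComplexOrder

private lemma finsler_quad_conj {n k : Type*} [Fintype n] [Fintype k]
    (A : Matrix n k ℂ) (M : Matrix n n ℂ) (y : k → ℂ) :
    star y ⬝ᵥ (Aᴴ * M * A) *ᵥ y = star (A *ᵥ y) ⬝ᵥ M *ᵥ (A *ᵥ y) := by
  simp [star_mulVec, ← Matrix.mulVec_mulVec, dotProduct_mulVec, vecMul_vecMul]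

private lemma finsler_quad_self {m n : Type*} [Fintype m] [Fintype n]
    (R : Matrix m n ℂ) (x : n → ℂ) :
    star x ⬝ᵥ (Rᴴ * R) *ᵥ x = star (R *ᵥ x) ⬝ᵥ (R *ᵥ x) := by
  simp [star_mulVec, ← Matrix.mulVec_mulVec, dotProduct_mulVec, vecMul_vecMul]

private lemma finsler_quad_im {n : Type*} [Fintype n] {M : Matrix n n ℂ}
    (hM : M.IsHermitian) (x : n → ℂ) :
    (star x ⬝ᵥ M *ᵥ x).im = 0 := by
  have h : star (star x ⬝ᵥ M *ᵥ x) = star x ⬝ᵥ M *ᵥ x := by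
    rw [← Matrix.star_dotProduct, star_mulVec, ← dotProduct_mulVec, hM.eq]
  exact Complex.conj_eq_iff_im.mp h

private lemma finsler_quad_smul {n : Type*} [Fintype n] (M : Matrix n n ℂ) (a : ℂ) (u : n → ℂ) :
    star (a • u) ⬝ᵥ M *ᵥ (a • u) = (star a * a) * (star u ⬝ᵥ M *ᵥ u) := by
  simp [Matrix.mulVec_smul, star_smul, smul_dotProduct, dotProduct_smul, smul_eq_mul]; ring

/-- **Finsler's lemma.** For a complex matrix `R` and a Hermitian matrix `H`,
with `Rp` an injective matrix whose range equals the kernel of `R`,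
there exists `μ > 0` with `μ • Rᴴ R - H` positive definite iff
`Rpᴴ H Rp` is negative definite. -/
theorem finsler_lemma {m n k : Type*} [Fintype m] [Fintype n] [Fintype k]
    (R : Matrix m n ℂ) (H : Matrix n n ℂ) (hH : H.IsHermitian)
    (Rp : Matrix n k ℂ)
    (hinj : Function.Injective Rp.mulVecLin)
    (hrange : LinearMap.range Rp.mulVecLin = LinearMap.ker R.mulVecLin) :
    (∃ μ : ℝ, 0 < μ ∧ ((μ : ℂ) • (Rᴴ * R) - H).PosDef) ↔
      (-(Rpᴴ * H * Rp)).PosDef := by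
  -- the two quadratic-form functions
  set f : (n → ℂ) → ℝ := fun x => (star x ⬝ᵥ H *ᵥ x).re with hf
  set g : (n → ℂ) → ℝ := fun x => (star x ⬝ᵥ (Rᴴ * R) *ᵥ x).re with hg
  constructor
  · rintro ⟨μ, hμ, hP⟩
    refine Matrix.PosDef.of_dotProduct_mulVec_pos (isHermitian_conjTranspose_mul_mul Rp hH).neg fun y hy => ?_
    have hx0 : Rp *ᵥ y ≠ 0 := by
      intro h
      exact hy (hinj (by simpa [Matrix.mulVecLin_apply] using h))
    have hker : R *ᵥ (Rp *ᵥ y) = 0 := by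
      have hmem : Rp.mulVecLin y ∈ LinearMap.range Rp.mulVecLin := ⟨y, rfl⟩
      rw [hrange, LinearMap.mem_ker] at hmem
      simpa [Matrix.mulVecLin_apply] using hmem
    have h1 := hP.dotProduct_mulVec_pos hx0
    have he : star (Rp *ᵥ y) ⬝ᵥ (((μ : ℂ) • (Rᴴ * R) - H) *ᵥ (Rp *ᵥ y))
        = star y ⬝ᵥ (-(Rpᴴ * H * Rp)) *ᵥ y := by
      rw [Matrix.sub_mulVec, dotProduct_sub, Matrix.smul_mulVec, dotProduct_smul,
        ← Matrix.mulVec_mulVec, hker, Matrix.mulVec_zero, Matrix.neg_mulVec, dotProduct_neg,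
        finsler_quad_conj]
      simp
    rwa [he] at h1
  · intro hneg
    -- on the kernel of `R`, the form `f` is negative
    have hneg_ker : ∀ x : n → ℂ, x ≠ 0 → R *ᵥ x = 0 → f x < 0 := by
      intro x hx hRx
      have hmem : x ∈ LinearMap.range Rp.mulVecLin := by
        rw [hrange, LinearMap.mem_ker]
        ext i; simpa [Matrix.mulVecLin_apply] using congrFun hRx i
      obtain ⟨y, hy⟩ := hmem
      rw [Matrix.mulVecLin_apply] at hy
      have hy0 : y ≠ 0 := by
        rintro rfl; rw [Matrix.mulVec_zero] at hy; exact hx hy.symm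
      have h2 := hneg.dotProduct_mulVec_pos hy0
      rw [Complex.lt_def] at h2
      have := h2.1
      rw [Matrix.neg_mulVec, dotProduct_neg, finsler_quad_conj, hy] at this
      simpa [hf] using this
    -- nonnegativity of `g`, and positivity away from the kernel
    have hg_nonneg : ∀ x : n → ℂ, 0 ≤ g x := by
      intro x
      have := dotProduct_star_self_nonneg (R *ᵥ x)
      rw [Complex.le_def] at this
      simpa [hg, finsler_quad_self] using this.1
    have hg_pos : ∀ x : n → ℂ, x ≠ 0 → 0 ≤ f x → 0 < g x := by
      intro x hx hfx
      rcases lt_or_eq_of_le (hg_nonneg x) with h | h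
      · exact h
      exfalso
      have hq : star (R *ᵥ x) ⬝ᵥ (R *ᵥ x) = 0 := by
        have h1 := (dotProduct_star_self_nonneg (R *ᵥ x))
        rw [Complex.le_def] at h1
        have him := h1.2
        have hre : (star (R *ᵥ x) ⬝ᵥ (R *ᵥ x)).re = 0 := by
          rw [← finsler_quad_self]; exact h.symm
        exact Complex.ext hre him.symm
      have hRx : R *ᵥ x = 0 := dotProduct_star_self_eq_zero.mp hq
      exact absurd hfx (not_le.mpr (hneg_ker x hx hRx))
    -- continuity
    have hfc : Continuous f := by
      exact Complex.continuous_re.comp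
        ((continuous_id.star).dotProduct (continuous_const.matrix_mulVec continuous_id))
    have hgc : Continuous g := by
      exact Complex.continuous_re.comp
        ((continuous_id.star).dotProduct (continuous_const.matrix_mulVec continuous_id))
    -- the compact set where `f` is nonnegative on the sphere
    set K : Set (n → ℂ) := Metric.sphere (0 : n → ℂ) 1 ∩ {x | 0 ≤ f x} with hK
    have hKc : IsCompact K :=
      (isCompact_sphere (0 : n → ℂ) 1).of_isClosed_subset
        (Metric.isClosed_sphere.inter (isClosed_le continuous_const hfc))
        Set.inter_subset_left
    -- key claim : there is `μ > 0` dominating `f` by `μ * g` on the sphere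
    have key : ∃ μ : ℝ, 0 < μ ∧ ∀ x : n → ℂ, ‖x‖ = 1 → f x < μ * g x := by
      rcases K.eq_empty_or_nonempty with hKe | hKne
      · refine ⟨1, one_pos, fun x hx => ?_⟩
        have hxK : x ∉ K := by rw [hKe]; exact Set.notMem_empty x
        have : ¬ (0 ≤ f x) := by
          intro h
          exact hxK ⟨by simpa [mem_sphere_zero_iff_norm] using hx, h⟩
        have := not_le.mp this
        calc f x < 0 := this
          _ ≤ 1 * g x := by simpa using hg_nonneg x
      · obtain ⟨x₀, hx₀K, hmin⟩ := hKc.exists_isMinOn hKne hgc.continuousOn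
        have hx₀ne : x₀ ≠ 0 := by
          have : ‖x₀‖ = 1 := by simpa [mem_sphere_zero_iff_norm] using hx₀K.1
          intro h; rw [h] at this; simp at this
        have hc : 0 < g x₀ := hg_pos x₀ hx₀ne hx₀K.2
        obtain ⟨x₁, _, hmax⟩ := (isCompact_sphere (0 : n → ℂ) 1).exists_isMaxOn
          ⟨x₀, hx₀K.1⟩ hfc.continuousOn
        set c := g x₀
        set M := f x₁
        refine ⟨(max M 0 + 1) / c, by positivity, fun x hx => ?_⟩
        by_cases hfx : 0 ≤ f x
        · have hxK : x ∈ K := ⟨by simpa [mem_sphere_zero_iff_norm] using hx, hfx⟩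
          have hgx : c ≤ g x := hmin hxK
          have hfxM : f x ≤ M := hmax (by simpa [mem_sphere_zero_iff_norm] using hx)
          calc f x ≤ M := hfxM
            _ ≤ max M 0 := le_max_left _ _
            _ < max M 0 + 1 := lt_add_one _
            _ = (max M 0 + 1) / c * c := by field_simp
            _ ≤ (max M 0 + 1) / c * g x := by
                apply mul_le_mul_of_nonneg_left hgx; positivity
        · have h1 : f x < 0 := not_le.mp hfx
          have h2 : 0 ≤ (max M 0 + 1) / c * g x := by
            apply mul_nonneg (by positivity) (hg_nonneg x)
          linarith
    obtain ⟨μ, hμ, hkey⟩ := key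
    have herm : (((μ : ℂ)) • (Rᴴ * R) - H).IsHermitian := by
      have h1 : ((μ : ℂ) • (Rᴴ * R)).IsHermitian := by
        have h2 := isHermitian_conjTranspose_mul_self R
        unfold Matrix.IsHermitian at *
        rw [conjTranspose_smul, h2, Complex.star_def, Complex.conj_ofReal]
      exact h1.sub hH
    refine ⟨μ, hμ, Matrix.PosDef.of_dotProduct_mulVec_pos herm fun x hx => ?_⟩
    · -- normalize x
      have ht : (0 : ℝ) < ‖x‖ := norm_pos_iff.mpr hx
      set t : ℝ := ‖x‖
      set u : n → ℂ := ((t : ℂ))⁻¹ • x with hu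
      have hx_eq : x = (t : ℂ) • u := by
        rw [hu, smul_inv_smul₀ (by exact_mod_cast ht.ne')]
      have hun : ‖u‖ = 1 := by
        rw [hu, norm_smul]
        simp [t, norm_inv, inv_mul_cancel₀ ht.ne']
      have hqu := hkey u hun
      rw [Complex.lt_def]
      constructor
      · rw [hx_eq, finsler_quad_smul]
        have hquad : (star u ⬝ᵥ (((μ : ℂ)) • (Rᴴ * R) - H) *ᵥ u).re = μ * g u - f u := by
          rw [Matrix.sub_mulVec, dotProduct_sub, Matrix.smul_mulVec, dotProduct_smul]
          simp [hf, hg, smul_eq_mul, Complex.mul_re]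
        have h0 : star ((t : ℂ)) * (t : ℂ) = ((t ^ 2 : ℝ) : ℂ) := by
          rw [Complex.star_def, Complex.conj_ofReal]; push_cast; ring
        rw [h0, Complex.re_ofReal_mul, hquad]
        simp only [Complex.zero_re]
        have : 0 < μ * g u - f u := by linarith
        positivity
      · rw [finsler_quad_im herm x]
        simp
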